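/- The matrix D^s defined by (D^s)_{j,l} = -Σ_{k=-N/2}^{N/2} (1/(N c_k)) |kμ|^s exp(-i k μ (x_j - x_l)) is negative semidefinite: for every vector U ∈ R^N, U^T D^s U ≤ 0. -/

import Mathlib

set_option maxHeartbeats 1000000


open Complex

/-- The Fourier pseudo-spectral fractional differentiation matrix
`(Dˢ)_{j,l} = -Σ_{k=-N/2}^{N/2} (1/(N c_k)) |kμ|ˢ exp(-i k μ (x_j - x_l))`,
with `x_j = x_a + j h`, `h = (x_b - x_a)/N`, `μ = 2π/(x_b - x_a)`,
`c_k = 1` for `|k| < N/2` and `c_k = 2` for `k = ±N/2`. -/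
noncomputable def spectralFracMatrix (N : ℕ) (xa xb s : ℝ) :
    Matrix (Fin N) (Fin N) ℂ :=
  fun j l =>
    -∑ k ∈ Finset.Icc (-(N : ℤ) / 2) ((N : ℤ) / 2),
      (1 / ((N : ℂ) * (if 2 * k.natAbs = N then (2 : ℂ) else 1))) *
        ((|(k : ℝ) * (2 * Real.pi / (xb - xa))| ^ s : ℝ) : ℂ) *
        Complex.exp (-Complex.I * (k : ℂ) * ((2 * Real.pi / (xb - xa) : ℝ) : ℂ) *
          (((xa + (j : ℝ) * ((xb - xa) / N)) - (xa + (l : ℝ) * ((xb - xa) / N)) : ℝ) : ℂ))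

/-- Core factorization lemma. -/
lemma core_factor {N : ℕ} (w : ℝ) (t : Fin N → ℝ) (U : Fin N → ℝ) :
    ∑ j : Fin N, ∑ l : Fin N, (U j : ℂ) *
        Complex.exp (-(Complex.I * (w : ℂ) * ((t j - t l : ℝ) : ℂ))) * (U l : ℂ)
    = ((Complex.normSq (∑ j : Fin N, (U j : ℂ) *
        Complex.exp (-(Complex.I * (w : ℂ) * ((t j : ℝ) : ℂ)))) : ℝ) : ℂ) := by
  rw [← Complex.mul_conj, map_sum, Finset.sum_mul_sum]
  refine Finset.sum_congr rfl fun j _ => Finset.sum_congr rfl fun l _ => ?_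
  have hconj : (starRingEnd ℂ) ((U l : ℂ) * Complex.exp (-(Complex.I * (w : ℂ) * ((t l : ℝ) : ℂ))))
      = (U l : ℂ) * Complex.exp (Complex.I * (w : ℂ) * ((t l : ℝ) : ℂ)) := by
    rw [map_mul, ← Complex.exp_conj]
    simp [Complex.conj_ofReal]
  rw [hconj]
  rw [show (-(Complex.I * (w : ℂ) * ((t j - t l : ℝ) : ℂ)))
      = (-(Complex.I * (w : ℂ) * ((t j : ℝ) : ℂ))) + (Complex.I * (w : ℂ) * ((t l : ℝ) : ℂ)) by
    push_cast; ring]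
  rw [Complex.exp_add]
  ring

/-- The pseudo-spectral differentiation matrix `Dˢ` is negative semidefinite:
`Uᵀ Dˢ U ≤ 0` for every real vector `U`. -/
theorem spectralFracMatrix_negSemidef (N : ℕ) (hN : 0 < N) (hNeven : Even N)
    (xa xb s : ℝ) (hab : xa < xb) (hs : 0 < s) :
    ∀ U : Fin N → ℝ,
      (dotProduct (fun j => (U j : ℂ))
        ((spectralFracMatrix N xa xb s).mulVec fun j => (U j : ℂ))).re ≤ 0 := by
  intro U
  set μ : ℝ := 2 * Real.pi / (xb - xa) with hμ
  set t : Fin N → ℝ := fun j => xa + (j : ℝ) * ((xb - xa) / N) with ht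
  have key : (dotProduct (fun j => (U j : ℂ))
        ((spectralFracMatrix N xa xb s).mulVec fun j => (U j : ℂ)))
      = -∑ k ∈ Finset.Icc (-(N : ℤ) / 2) ((N : ℤ) / 2),
          (1 / ((N : ℂ) * (if 2 * k.natAbs = N then (2 : ℂ) else 1))) *
            ((|(k : ℝ) * μ| ^ s : ℝ) : ℂ) *
            ((Complex.normSq (∑ j : Fin N, (U j : ℂ) *
              Complex.exp (-(Complex.I * (((k : ℝ) * μ : ℝ) : ℂ) * ((t j : ℝ) : ℂ)))) : ℝ) : ℂ) := by
    unfold spectralFracMatrix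
    simp only [dotProduct, Matrix.mulVec]
    simp only [dotProduct, mul_neg, neg_mul, Finset.mul_sum, Finset.sum_mul]
    simp only [Finset.sum_neg_distrib]
    congr 1
    rw [Finset.sum_congr rfl fun (j : Fin N) _ => Finset.sum_comm, Finset.sum_comm]
    refine Finset.sum_congr rfl fun k _ => ?_
    have hterm : ∀ j l : Fin N,
        (U j : ℂ) * ((1 / ((N : ℂ) * (if 2 * k.natAbs = N then (2 : ℂ) else 1))) *
          ((|(k : ℝ) * (2 * Real.pi / (xb - xa))| ^ s : ℝ) : ℂ) *
          Complex.exp (-(Complex.I * (k : ℂ) * ((2 * Real.pi / (xb - xa) : ℝ) : ℂ) *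
            (((xa + (j : ℝ) * ((xb - xa) / N)) - (xa + (l : ℝ) * ((xb - xa) / N)) : ℝ) : ℂ))) *
          (U l : ℂ))
        = ((1 / ((N : ℂ) * (if 2 * k.natAbs = N then (2 : ℂ) else 1))) *
            ((|(k : ℝ) * μ| ^ s : ℝ) : ℂ)) *
          ((U j : ℂ) * Complex.exp (-(Complex.I * (((k : ℝ) * μ : ℝ) : ℂ) * ((t j - t l : ℝ) : ℂ))) *
            (U l : ℂ)) := by
      intro j l
      have harg : (-(Complex.I * (k : ℂ) * ((2 * Real.pi / (xb - xa) : ℝ) : ℂ) *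
            (((xa + (j : ℝ) * ((xb - xa) / N)) - (xa + (l : ℝ) * ((xb - xa) / N)) : ℝ) : ℂ)))
          = -(Complex.I * (((k : ℝ) * μ : ℝ) : ℂ) * ((t j - t l : ℝ) : ℂ)) := by
        rw [hμ, ht]; push_cast; ring
      rw [harg, hμ]; ring
    rw [Finset.sum_congr rfl fun (j : Fin N) _ => Finset.sum_congr rfl fun (l : Fin N) _ =>
      hterm j l]
    simp only [← Finset.mul_sum]
    rw [core_factor ((k : ℝ) * μ) t U]
  rw [key]
  rw [Complex.neg_re]
  simp only [neg_nonpos]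
  rw [Complex.re_sum]
  refine Finset.sum_nonneg fun k _ => ?_
  have hterm : (1 / ((N : ℂ) * (if 2 * k.natAbs = N then (2 : ℂ) else 1))) *
      ((|(k : ℝ) * μ| ^ s : ℝ) : ℂ) *
      ((Complex.normSq (∑ j : Fin N, (U j : ℂ) *
        Complex.exp (-(Complex.I * (((k : ℝ) * μ : ℝ) : ℂ) * ((t j : ℝ) : ℂ)))) : ℝ) : ℂ)
      = (((1 / ((N : ℝ) * (if 2 * k.natAbs = N then (2 : ℝ) else 1))) *
          (|(k : ℝ) * μ| ^ s) *
          Complex.normSq (∑ j : Fin N, (U j : ℂ) *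
            Complex.exp (-(Complex.I * (((k : ℝ) * μ : ℝ) : ℂ) * ((t j : ℝ) : ℂ)))) : ℝ) : ℂ) := by
    split <;> push_cast <;> ring
  rw [hterm, Complex.ofReal_re]
  have h3 : (0:ℝ) ≤ Complex.normSq (∑ j : Fin N, (U j : ℂ) *
      Complex.exp (-(Complex.I * (((k : ℝ) * μ : ℝ) : ℂ) * ((t j : ℝ) : ℂ)))) :=
    Complex.normSq_nonneg _
  positivity
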